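/- Let n ≥ 2, let U ⊆ ℂ^n be open, let U' ⊆ ℂ^{n−1} be a connected open set containing the image of U under the projection onto the first n−1 coordinates, and let F be a nonconstant holomorphic function on U'. Define f : U → ℂ by f(z₁,…,z_n) = F(z₁,…,z_{n−1}) and W' = {z ∈ U : f(z) ≠ 0 and z_n = exp(1/f(z))}. Then for every point w ∈ U with f(w) = 0 and every open neighborhood V ⊆ U of w, there is no set S ⊆ V, closed in V, such that W' ∩ V ⊆ S and every point of S has an open neighborhood V'' ⊆ V with S ∩ V'' = G^{-1}(0) for some holomorphic function G : V'' → ℂ whose derivative is nonzero at every point of V''; in other words, W' ∩ V cannot be contained in a closed (n−1)-dimensional complex submanifold of V, so W' cannot be extended as a complex manifold through any neighborhood of a zero of f. -/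

import Mathlib

open Complex Set

noncomputable section

abbrev Cn (n : ℕ) : Type := Fin n → ℂ

/-- `f` is holomorphic on `V` : complex Fréchet differentiable at each point of `V`. -/
def HoloOn {n : ℕ} {F : Type} [NormedAddCommGroup F] [NormedSpace ℂ F]
    (f : Cn n → F) (V : Set (Cn n)) : Prop :=
  ∀ z ∈ V, DifferentiableAt ℂ f z

/-- Multiplication by `i` as an `ℝ`-linear map on `ℂⁿ`. -/
def mulI (n : ℕ) : Cn n →ₗ[ℝ] Cn n where
  toFun v := Complex.I • v
  map_add' v w := smul_add _ v w
  map_smul' c v := smul_comm Complex.I c v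

/-- The Levi form of `ρ` is positive on nonzero vectors, at every point of `N`. -/
def LeviPositive {n : ℕ} (ρ : Cn n → ℝ) (N : Set (Cn n)) : Prop :=
  ∀ z ∈ N, ∀ v : Cn n, v ≠ 0 →
    0 < (1/4 : ℝ) * (iteratedFDeriv ℝ 2 ρ z ![v, v]
      + iteratedFDeriv ℝ 2 ρ z ![Complex.I • v, Complex.I • v])

/-- Strongly pseudoconvex domain with smooth boundary (boundedness stated separately). -/
def IsSPSCDomain (n : ℕ) (Ω : Set (Cn n)) : Prop :=
  IsOpen Ω ∧ IsConnected Ω ∧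
  ∃ (N : Set (Cn n)) (ρ : Cn n → ℝ), IsOpen N ∧ frontier Ω ⊆ N ∧
    ContDiffOn ℝ (⊤ : ℕ∞) ρ N ∧ Ω ∩ N = {z ∈ N | ρ z < 0} ∧
    (∀ z ∈ frontier Ω, fderiv ℝ ρ z ≠ 0) ∧ LeviPositive ρ N

/-- The hull of `K` w.r.t. functions holomorphic on neighborhoods of `closure Ω`. -/
def hullIn (n : ℕ) (Ω K : Set (Cn n)) : Set (Cn n) :=
  {z ∈ closure Ω | ∀ V : Set (Cn n), IsOpen V → closure Ω ⊆ V →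
    ∀ f : Cn n → ℂ, HoloOn f V → ‖f z‖ ≤ ⨆ w ∈ K, ‖f w‖}

/-- `A` is a relatively open subset of `S`. -/
def RelOpenIn {n : ℕ} (S A : Set (Cn n)) : Prop :=
  ∃ U : Set (Cn n), IsOpen U ∧ A = U ∩ S

/-- The boundary of `A` inside `S` (for `A` relatively open in `S`). -/
def bdryIn {n : ℕ} (S A : Set (Cn n)) : Set (Cn n) := (closure A ∩ S) \ A

/-- `φ` is a local defining map for `M` near `p`. -/
def IsLocalDefiningMap {n k : ℕ} (M : Set (Cn n)) (p : Cn n)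
    (V : Set (Cn n)) (φ : Cn n → Fin k → ℝ) : Prop :=
  IsOpen V ∧ p ∈ V ∧ ContDiffOn ℝ (⊤ : ℕ∞) φ V ∧
    (∀ z ∈ V, Function.Surjective (fderiv ℝ φ z)) ∧
    M ∩ V = {z ∈ V | φ z = 0}

/-- The tangent space `ker Dφ(p)` as an `ℝ`-subspace of `ℂⁿ`. -/
def tangentAt {n k : ℕ} (φ : Cn n → Fin k → ℝ) (p : Cn n) : Submodule ℝ (Cn n) :=
  LinearMap.ker ((fderiv ℝ φ p : Cn n →L[ℝ] (Fin k → ℝ)) : Cn n →ₗ[ℝ] (Fin k → ℝ))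

/-- `M` is a maximally complex `(2m+1)`-dimensional closed real submanifold of `A`. -/
def IsMaxCplxSubmanifold (n m : ℕ) (A M : Set (Cn n)) : Prop :=
  M ⊆ A ∧ closure M ∩ A ⊆ M ∧
  ∀ p ∈ M, ∃ (V : Set (Cn n)) (φ : Cn n → Fin (2*n - (2*m+1)) → ℝ),
    IsLocalDefiningMap M p V φ ∧
    Module.finrank ℝ
      ↥(tangentAt φ p ⊓ Submodule.map (mulI n) (tangentAt φ p)) = 2*m

/-- The level set of `f` through `p` meets `M` transversally at `p`:
`ker Df(p) + T_pM = ℂⁿ` as real vector spaces. -/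
def TransversalAt (n m : ℕ) (M : Set (Cn n)) (f : Cn n → ℂ) (p : Cn n) : Prop :=
  ∀ (V : Set (Cn n)) (φ : Cn n → Fin (2*n - (2*m+1)) → ℝ),
    IsLocalDefiningMap M p V φ →
    LinearMap.ker (((fderiv ℂ f p).restrictScalars ℝ : Cn n →L[ℝ] ℂ) : Cn n →ₗ[ℝ] ℂ) ⊔ tangentAt φ p = ⊤

/-- `p` is a regular point of the `k`-dimensional variety `W`. -/
def IsVarietyRegularPoint (n k : ℕ) (W : Set (Cn n)) (p : Cn n) : Prop :=
  ∃ (V : Set (Cn n)) (F : Cn n → Fin (n - k) → ℂ), IsOpen V ∧ p ∈ V ∧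
    HoloOn F V ∧ (∀ z ∈ V, Function.Surjective (fderiv ℂ F z)) ∧
    W ∩ V = {z ∈ V | F z = 0}

/-- `W` is a `k`-dimensional complex variety in the open set `G`. -/
def IsComplexVariety (n k : ℕ) (G W : Set (Cn n)) : Prop :=
  W ⊆ G ∧ closure W ∩ G ⊆ W ∧
  (∀ p ∈ W, ∃ (V : Set (Cn n)) (ι : Type) (g : ι → Cn n → ℂ),
    IsOpen V ∧ p ∈ V ∧ V ⊆ G ∧ (∀ i, HoloOn (g i) V) ∧
    W ∩ V = {z ∈ V | ∀ i, g i z = 0}) ∧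
  W ⊆ closure {p ∈ W | IsVarietyRegularPoint n k W p}

/-- The singular set of `W` is closed and discrete in `G`. -/
def HasIsolatedSingularities (n k : ℕ) (G W : Set (Cn n)) : Prop :=
  closure {p ∈ W | ¬ IsVarietyRegularPoint n k W p} ∩ G
      ⊆ {p ∈ W | ¬ IsVarietyRegularPoint n k W p} ∧
  ∀ p ∈ W, ¬ IsVarietyRegularPoint n k W p →
    ∃ V : Set (Cn n), IsOpen V ∧ p ∈ V ∧
      {q ∈ W | ¬ IsVarietyRegularPoint n k W q} ∩ V = {p}

open Filter Metric Topology

/-- One-variable reach lemma. -/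
lemma reach_exp {g : ℂ → ℂ} {R : ℝ} (hR : 0 < R)
    (hg : DifferentiableOn ℂ g (ball (0:ℂ) R)) (hg0 : g 0 = 0)
    (hnev : ¬ ∀ᶠ l in nhds (0:ℂ), g l = 0) (t : ℂ) (ht : t ≠ 0) {ε : ℝ} (hε : 0 < ε) :
    ∃ l : ℂ, ‖l‖ < ε ∧ g l ≠ 0 ∧ Complex.exp (1 / g l) = t := by
  have han : AnalyticOnNhd ℂ g (ball 0 R) := hg.analyticOnNhd isOpen_ball
  have h0 : AnalyticAt ℂ g 0 := han 0 (mem_ball_self hR)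
  rcases h0.eventually_constant_or_nhds_le_map_nhds with h | h
  · exact absurd (h.mono fun z hz => by rwa [hg0] at hz) hnev
  · rw [hg0] at h
    have hA : ball (0:ℂ) ε ∈ nhds (0:ℂ) := ball_mem_nhds _ hε
    have himg : g '' ball (0:ℂ) ε ∈ nhds (0:ℂ) := h (image_mem_map hA)
    obtain ⟨δ, hδ, hδsub⟩ := Metric.mem_nhds_iff.1 himg
    obtain ⟨k, hk⟩ := exists_nat_gt ((1/δ + Real.pi + ‖Complex.log t‖) / (2 * Real.pi))
    have hπ : (0:ℝ) < 2 * Real.pi := by positivity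
    have hklarge : 1/δ + Real.pi + ‖Complex.log t‖ < 2 * Real.pi * k := by
      rw [div_lt_iff₀ hπ] at hk; linarith
    set d : ℂ := Complex.log t + (2 * Real.pi * k : ℝ) * Complex.I with hd
    have hdI : ‖((2 * Real.pi * k : ℝ) : ℂ) * Complex.I‖ = 2 * Real.pi * k := by
      rw [norm_mul, Complex.norm_I, mul_one, Complex.norm_real]
      exact abs_of_nonneg (by positivity)
    have hdlow : 1/δ < ‖d‖ := by
      have h1 : ((2 * Real.pi * k : ℝ) : ℂ) * Complex.I = d - Complex.log t := by
        rw [hd]; ring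
      have h2 : 2 * Real.pi * k ≤ ‖d‖ + ‖Complex.log t‖ := by
        rw [← hdI, h1]; exact norm_sub_le _ _
      linarith
    have hδinv : (0:ℝ) < 1/δ := by positivity
    have hd0 : d ≠ 0 := by
      intro h0'
      rw [h0'] at hdlow; simp at hdlow; linarith
    have hcmem : d⁻¹ ∈ ball (0:ℂ) δ := by
      rw [mem_ball_zero_iff, norm_inv]
      have hdn : (0:ℝ) < ‖d‖ := lt_trans hδinv hdlow
      rw [inv_lt_comm₀ hdn hδ]
      rwa [one_div] at hdlow
    obtain ⟨l, hlmem, hgl⟩ := hδsub hcmem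
    have hgl0 : g l ≠ 0 := by rw [hgl]; exact inv_ne_zero hd0
    refine ⟨l, mem_ball_zero_iff.1 hlmem, hgl0, ?_⟩
    rw [hgl, one_div, inv_inv, hd]
    have : Complex.exp (Complex.log t + (2 * Real.pi * k : ℝ) * Complex.I)
        = Complex.exp (Complex.log t) * Complex.exp ((k : ℤ) * (2 * Real.pi * Complex.I)) := by
      rw [← Complex.exp_add]; congr 1; push_cast; ring
    rw [this, Complex.exp_log ht, Complex.exp_int_mul_two_pi_mul_I, mul_one]

/-- `F` holomorphic, nonconstant on open connected `U'` is not locally zero anywhere. -/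
lemma not_locally_zero {m : ℕ} {U' : Set (Cn m)} (hU' : IsOpen U')
    (hU'conn : IsConnected U') {F : Cn m → ℂ} (hF : HoloOn F U')
    (hFnc : ¬ ∃ c : ℂ, ∀ z ∈ U', F z = c) :
    ∀ z ∈ U', ¬ ∀ᶠ y in nhds z, F y = 0 := by
  set u := interior (F ⁻¹' {0}) with hu
  have huopen : IsOpen u := isOpen_interior
  have hprop : closure u ∩ U' ⊆ u := by
    rintro z ⟨hzc, hzU'⟩
    obtain ⟨r, hr, hball⟩ := Metric.isOpen_iff.1 hU' z hzU'
    obtain ⟨a, ha, hadist⟩ := Metric.mem_closure_iff.1 hzc (r/4) (by positivity)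
    have key : ∀ y : Cn m, dist y z < r/4 → F y = 0 := by
      intro y hy
      set L : ℂ → Cn m := fun l => a + l • (y - a) with hL
      have hLmem : ∀ l : ℂ, l ∈ ball (0:ℂ) (3/2) → L l ∈ ball z r := by
        intro l hl
        have h1 : ‖a - z‖ < r/4 := by rwa [dist_comm, dist_eq_norm] at hadist
        have h2 : ‖y - a‖ < r/2 := by
          have : y - a = (y - z) + (z - a) := by ring
          rw [this]
          have hyz : ‖y - z‖ < r/4 := by rwa [dist_eq_norm] at hy
          have hza : ‖z - a‖ < r/4 := by rwa [dist_eq_norm] at hadist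
          calc ‖(y - z) + (z - a)‖ ≤ ‖y - z‖ + ‖z - a‖ := norm_add_le _ _
            _ < r/2 := by linarith
        have hl' : ‖l‖ < 3/2 := mem_ball_zero_iff.1 hl
        rw [mem_ball, dist_eq_norm]
        have hLz : L l - z = (a - z) + l • (y - a) := by rw [hL]; ring
        calc ‖L l - z‖ = ‖(a - z) + l • (y - a)‖ := by rw [hLz]
          _ ≤ ‖a - z‖ + ‖l‖ * ‖y - a‖ := by
              refine (norm_add_le _ _).trans ?_
              rw [norm_smul]
          _ < r/4 + (3/2) * (r/2) := by
              have : ‖l‖ * ‖y - a‖ ≤ (3/2) * ‖y - a‖ :=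
                mul_le_mul_of_nonneg_right hl'.le (norm_nonneg _)
              nlinarith [norm_nonneg (y - a)]
          _ = r := by ring
      have hLdiff : ∀ l : ℂ, DifferentiableAt ℂ L l := by
        intro l
        exact (differentiableAt_fun_id.smul_const (y - a)).const_add a
      have hgd : DifferentiableOn ℂ (F ∘ L) (ball (0:ℂ) (3/2)) := by
        intro l hl
        exact (((hF _ (hball (hLmem l hl))).comp l (hLdiff l))).differentiableWithinAt
      have hga : AnalyticOnNhd ℂ (F ∘ L) (ball 0 (3/2)) := hgd.analyticOnNhd isOpen_ball
      have hev : (F ∘ L) =ᶠ[nhds (0:ℂ)] 0 := by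
        have hL0 : L 0 = a := by simp [hL]
        have hLc : ContinuousAt L 0 := (hLdiff 0).continuousAt
        have hmem : u ∈ nhds a := huopen.mem_nhds ha
        have : ∀ᶠ l in nhds (0:ℂ), L l ∈ u := by
          rw [← hL0] at hmem
          exact hLc hmem
        filter_upwards [this] with l hl
        have h2 : L l ∈ F ⁻¹' {0} := interior_subset hl
        simpa using h2
      have heq := hga.eqOn_zero_of_preconnected_of_eventuallyEq_zero
        (convex_ball _ _).isPreconnected (mem_ball_self (by norm_num)) hev
      have h1 : (F ∘ L) 1 = 0 := heq (mem_ball_zero_iff.2 (by norm_num))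
      simpa [hL] using h1
    apply mem_interior.2
    exact ⟨ball z (r/4), fun y hy => key y (mem_ball.1 hy), isOpen_ball,
      mem_ball_self (by positivity)⟩
  intro z hz hev
  have hzu : z ∈ u := by
    rw [hu, mem_interior_iff_mem_nhds]
    filter_upwards [hev] with y hy using hy
  have hsub : U' ⊆ u := hU'conn.isPreconnected.subset_of_closure_inter_subset huopen
    ⟨z, hz, hzu⟩ hprop
  exact hFnc ⟨0, fun x hx => by simpa using interior_subset (hsub hx)⟩

/-- Density of the graph values near a zero of `F`. -/
lemma density_exp {m : ℕ} {U' : Set (Cn m)} (hU' : IsOpen U')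
    (hU'conn : IsConnected U') {F : Cn m → ℂ} (hF : HoloOn F U')
    (hFnc : ¬ ∃ c : ℂ, ∀ z ∈ U', F z = c)
    {z : Cn m} (hz : z ∈ U') (hz0 : F z = 0) (t : ℂ) (ht : t ≠ 0) {ε : ℝ} (hε : 0 < ε) :
    ∃ y : Cn m, ‖y - z‖ < ε ∧ F y ≠ 0 ∧ Complex.exp (1 / F y) = t := by
  obtain ⟨r, hr, hball⟩ := Metric.isOpen_iff.1 hU' z hz
  set ε' := min ε r with hε'def
  have hε' : 0 < ε' := lt_min hε hr
  have hnl := not_locally_zero hU' hU'conn hF hFnc z hz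
  have hex : ∃ a, dist a z < ε'/4 ∧ F a ≠ 0 := by
    by_contra hcon
    push_neg at hcon
    exact hnl (Metric.eventually_nhds_iff.2 ⟨ε'/4, by positivity,
      fun {y} hy => hcon y hy⟩)
  obtain ⟨a, hadist, haF⟩ := hex
  set L : ℂ → Cn m := fun l => z + l • (a - z) with hL
  have hLdiff : ∀ l : ℂ, DifferentiableAt ℂ L l :=
    fun l => (differentiableAt_fun_id.smul_const (a - z)).const_add z
  have hLmem : ∀ l : ℂ, l ∈ ball (0:ℂ) (3/2) → L l ∈ ball z r := by
    intro l hl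
    have h1 : ‖a - z‖ < ε'/4 := by rwa [dist_eq_norm] at hadist
    have hl' : ‖l‖ < 3/2 := mem_ball_zero_iff.1 hl
    rw [mem_ball, dist_eq_norm]
    have hLz : L l - z = l • (a - z) := by rw [hL]; ring
    rw [hLz, norm_smul]
    have : ‖l‖ * ‖a - z‖ < (3/2) * (ε'/4) :=
      mul_lt_mul' hl'.le h1 (norm_nonneg _) (by norm_num)
    have hle : ε' ≤ r := min_le_right _ _
    nlinarith
  have hgd : DifferentiableOn ℂ (F ∘ L) (ball (0:ℂ) (3/2)) := fun l hl =>
    ((hF _ (hball (hLmem l hl))).comp l (hLdiff l)).differentiableWithinAt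
  have hg0 : (F ∘ L) 0 = 0 := by simp [hL, hz0]
  have hg1 : (F ∘ L) 1 ≠ 0 := by simpa [hL] using haF
  have hnev : ¬ ∀ᶠ l in nhds (0:ℂ), (F ∘ L) l = 0 := by
    intro hev
    have heq := ((hgd.analyticOnNhd isOpen_ball).eqOn_zero_of_preconnected_of_eventuallyEq_zero
      (convex_ball _ _).isPreconnected (mem_ball_self (by norm_num))
      (by filter_upwards [hev] with x hx using hx))
    exact hg1 (heq (mem_ball_zero_iff.2 (by norm_num)))
  obtain ⟨l, hlnorm, hgl, hexp⟩ := reach_exp (by norm_num) hgd hg0 hnev t ht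
    (show (0:ℝ) < 1 by norm_num)
  refine ⟨L l, ?_, hgl, hexp⟩
  have hLz : L l - z = l • (a - z) := by rw [hL]; ring
  rw [hLz, norm_smul]
  have h1 : ‖a - z‖ < ε'/4 := by rwa [dist_eq_norm] at hadist
  have hεε : ε' ≤ ε := min_le_left _ _
  nlinarith [norm_nonneg (a - z), norm_nonneg l]

open Filter Metric Topology in
private lemma snoc_sub_snoc' {m : ℕ} (y z : Cn m) (s t : ℂ) :
    (Fin.snoc y s : Cn (m+1)) - Fin.snoc z t = Fin.snoc (y - z) (s - t) := by
  funext i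
  refine Fin.lastCases ?_ (fun k => ?_) i
  · simp [Fin.snoc_last]
  · simp [Fin.snoc_castSucc]

open Filter Metric Topology in
private lemma norm_snoc_le' {m : ℕ} (y : Cn m) (s : ℂ) :
    ‖(Fin.snoc y s : Cn (m+1))‖ ≤ max ‖y‖ ‖s‖ := by
  refine (pi_norm_le_iff_of_nonneg (le_max_of_le_right (norm_nonneg s))).2 fun i => ?_
  refine Fin.lastCases ?_ (fun k => ?_) i
  · simp [Fin.snoc_last]
  · simp only [Fin.snoc_castSucc]
    exact le_max_of_le_left (norm_le_pi_norm y k)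

private lemma init_snoc' {m : ℕ} (y : Cn m) (t : ℂ) :
    (fun i : Fin m => (Fin.snoc y t : Cn (m+1)) i.castSucc) = y :=
  funext fun i => Fin.snoc_castSucc ..

/-- The graph `W' = {f ≠ 0, z_{n+1} = exp(1/f)}` cannot be extended as
a closed complex hypersurface-submanifold through any neighborhood of a zero of `f`
(from Example 4.1 of the paper). -/
theorem graph_does_not_extend (n : ℕ) (hn : 1 ≤ n)
    (U : Set (Cn (n+1))) (hU : IsOpen U)
    (U' : Set (Cn n)) (hU' : IsOpen U') (hU'conn : IsConnected U')
    (hproj : (fun z : Cn (n+1) => fun i : Fin n => z i.castSucc) '' U ⊆ U')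
    (F : Cn n → ℂ) (hF : HoloOn F U')
    (hFnc : ¬ ∃ c : ℂ, ∀ z ∈ U', F z = c)
    (W' : Set (Cn (n+1)))
    (hW' : W' = {z ∈ U | F (fun i => z i.castSucc) ≠ 0 ∧
      z (Fin.last n) = Complex.exp (1 / F (fun i => z i.castSucc))})
    (w : Cn (n+1)) (hw : w ∈ U) (hfw : F (fun i => w i.castSucc) = 0)
    (V : Set (Cn (n+1))) (hV : IsOpen V) (hwV : w ∈ V) (hVU : V ⊆ U) :
    ¬ ∃ S : Set (Cn (n+1)), S ⊆ V ∧ closure S ∩ V ⊆ S ∧ W' ∩ V ⊆ S ∧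
      ∀ p ∈ S, ∃ (V'' : Set (Cn (n+1))) (G : Cn (n+1) → ℂ),
        IsOpen V'' ∧ p ∈ V'' ∧ V'' ⊆ V ∧ HoloOn G V'' ∧
        (∀ z ∈ V'', fderiv ℂ G z ≠ 0) ∧
        S ∩ V'' = {z ∈ V'' | G z = 0} := by

  rintro ⟨S, hSV, hScl, hWS, hS⟩
  set w' : Cn n := fun i => w i.castSucc with hw'def
  -- (0) basic projection fact
  have hprojU : ∀ {z : Cn (n+1)}, z ∈ U → (fun i : Fin n => z i.castSucc) ∈ U' :=
    fun {z} hz => hproj ⟨z, hz, rfl⟩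
  have hwsnoc : (Fin.snoc w' (w (Fin.last n)) : Cn (n+1)) = w := by
    funext i
    refine Fin.lastCases ?_ (fun k => ?_) i
    · simp [Fin.snoc_last]
    · simp [Fin.snoc_castSucc, hw'def]
  -- (1) vertical points over zeros of F, nonzero level
  have hsnocV_S : ∀ (z : Cn n) (t : ℂ), F z = 0 → t ≠ 0 →
      (Fin.snoc z t : Cn (n+1)) ∈ V → (Fin.snoc z t : Cn (n+1)) ∈ S := by
    intro z t hFz ht hmemV
    have hzU' : z ∈ U' := by
      have h1 := hprojU (hVU hmemV)
      rwa [init_snoc'] at h1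
    have hcl : (Fin.snoc z t : Cn (n+1)) ∈ closure (W' ∩ V) := by
      rw [Metric.mem_closure_iff]
      intro ε hε
      obtain ⟨η, hη, hballV⟩ := Metric.isOpen_iff.1 hV _ hmemV
      obtain ⟨y, hynorm, hyF, hyexp⟩ := density_exp hU' hU'conn hF hFnc hzU' hFz t ht
        (lt_min hε hη)
      have hdistyz : dist (Fin.snoc y t : Cn (n+1)) (Fin.snoc z t) ≤ ‖y - z‖ := by
        rw [dist_eq_norm, snoc_sub_snoc']
        simpa using norm_snoc_le' (y - z) (t - t)
      have hyV : (Fin.snoc y t : Cn (n+1)) ∈ V := by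
        apply hballV
        rw [mem_ball]
        exact lt_of_le_of_lt hdistyz (lt_of_lt_of_le hynorm (min_le_right _ _))
      refine ⟨Fin.snoc y t, ⟨?_, hyV⟩, ?_⟩
      · rw [hW']
        refine ⟨hVU hyV, ?_, ?_⟩
        · rw [init_snoc']; exact hyF
        · rw [Fin.snoc_last, init_snoc']; exact hyexp.symm
      · rw [dist_comm]
        exact lt_of_le_of_lt hdistyz (lt_of_lt_of_le hynorm (min_le_left _ _))
    exact hScl ⟨closure_mono hWS hcl, hmemV⟩
  -- (2) vertical points over zeros of F, all levels
  have hsnocS : ∀ (z : Cn n) (t : ℂ), F z = 0 →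
      (Fin.snoc z t : Cn (n+1)) ∈ V → (Fin.snoc z t : Cn (n+1)) ∈ S := by
    intro z t hFz hmemV
    by_cases ht : t = 0
    · subst ht
      have hcont0 : Continuous (fun s : ℂ => (Fin.snoc z s : Cn (n+1))) := by
        apply continuous_pi
        intro i'
        refine Fin.lastCases ?_ (fun k => ?_) i'
        · simp only [Fin.snoc_last]; exact continuous_id
        · simp only [Fin.snoc_castSucc]; exact continuous_const
      have hseq : Tendsto (fun k : ℕ => (((1:ℝ)/(k+1) : ℝ) : ℂ)) atTop (𝓝 0) := by
        have h1 : Tendsto (fun k : ℕ => (1:ℝ)/(k+1)) atTop (𝓝 0) :=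
          tendsto_one_div_add_atTop_nhds_zero_nat
        have h2 : Tendsto (fun k : ℕ => (((1:ℝ)/(k+1) : ℝ) : ℂ)) atTop (𝓝 ((0:ℝ):ℂ)) :=
          (Complex.continuous_ofReal.tendsto (0:ℝ)).comp h1
        simpa using h2
      have hT : Tendsto (fun k : ℕ => (Fin.snoc z (((1:ℝ)/(k+1) : ℝ) : ℂ) : Cn (n+1)))
          atTop (𝓝 (Fin.snoc z 0)) := (hcont0.tendsto (0:ℂ)).comp hseq
      have hVev : ∀ᶠ k : ℕ in atTop,
          (Fin.snoc z (((1:ℝ)/(k+1) : ℝ) : ℂ) : Cn (n+1)) ∈ V :=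
        hT.eventually (hV.eventually_mem hmemV)
      have hSev : ∀ᶠ k : ℕ in atTop,
          (Fin.snoc z (((1:ℝ)/(k+1) : ℝ) : ℂ) : Cn (n+1)) ∈ S := by
        filter_upwards [hVev] with k hk
        refine hsnocV_S z _ hFz ?_ hk
        exact Complex.ofReal_ne_zero.2 (by positivity)
      exact hScl ⟨mem_closure_of_tendsto hT hSev, hmemV⟩
    · exact hsnocV_S z t hFz ht hmemV
  -- (3) w itself is in S; get the local defining function G
  have hwS : w ∈ S := by
    have := hsnocS w' (w (Fin.last n)) hfw (by rwa [hwsnoc])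
    rwa [hwsnoc] at this
  obtain ⟨V'', G, hV''o, hwV'', hV''V, hG, hG', hSG⟩ := hS w hwS
  obtain ⟨r, hr, hbr⟩ := Metric.isOpen_iff.1 hV''o w hwV''
  have hGzero : ∀ z : Cn (n+1), z ∈ S → z ∈ V'' → G z = 0 := by
    intro z h1 h2
    have : z ∈ S ∩ V'' := ⟨h1, h2⟩
    rw [hSG] at this
    exact this.2
  have hmem_ball : ∀ (v : Cn n) (τ : ℂ), ‖v‖ < r/2 → ‖τ - w (Fin.last n)‖ < r/2 →
      (Fin.snoc (w' + v) τ : Cn (n+1)) ∈ ball w r := by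
    intro v τ h1 h2
    rw [mem_ball, dist_eq_norm]
    have heq : (Fin.snoc (w' + v) τ : Cn (n+1)) - w
        = Fin.snoc v (τ - w (Fin.last n)) := by
      conv_lhs => rw [← hwsnoc]
      rw [snoc_sub_snoc', add_sub_cancel_left]
    rw [heq]
    calc ‖(Fin.snoc v (τ - w (Fin.last n)) : Cn (n+1))‖
        ≤ max ‖v‖ ‖τ - w (Fin.last n)‖ := norm_snoc_le' _ _
      _ < r := max_lt (by linarith) (by linarith)
  -- (4) all complex partial derivatives of G vanish at w
  have hdir : ∀ j : Fin (n+1), ∃ ρ > 0, ∀ l : ℂ, ‖l‖ < ρ →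
      G (w + l • (Pi.single j (1:ℂ) : Cn (n+1))) = 0 := by
    intro j
    induction j using Fin.lastCases with
    | last =>
      refine ⟨r/2, half_pos hr, fun l hl => ?_⟩
      have hrep : w + l • (Pi.single (Fin.last n) (1:ℂ) : Cn (n+1))
          = (Fin.snoc (w' + 0) (w (Fin.last n) + l) : Cn (n+1)) := by
        funext i
        refine Fin.lastCases ?_ (fun k => ?_) i
        · simp [Fin.snoc_last]
        · simp [Fin.snoc_castSucc, hw'def, Pi.single_eq_of_ne (Fin.castSucc_lt_last k).ne]
      have hmem : (Fin.snoc (w' + 0) (w (Fin.last n) + l) : Cn (n+1)) ∈ ball w r :=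
        hmem_ball 0 _ (by simpa using half_pos hr) (by simpa using hl)
      rw [hrep]
      refine hGzero _ (hsnocS (w' + 0) _ (by simpa using hfw) (hV''V (hbr hmem))) (hbr hmem)
    | cast i =>
      set δi : Cn n := Pi.single i (1:ℂ) with hδidef
      have hδinorm : ‖δi‖ = 1 := by rw [hδidef, Pi.norm_single, norm_one]
      have hrep : ∀ l : ℂ, w + l • (Pi.single (Fin.castSucc i) (1:ℂ) : Cn (n+1))
          = (Fin.snoc (w' + l • δi) (w (Fin.last n)) : Cn (n+1)) := by
        intro l
        funext i'
        refine Fin.lastCases ?_ (fun k => ?_) i'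
        · simp [Fin.snoc_last, Pi.single_eq_of_ne (Fin.castSucc_lt_last i).ne']
        · have hsing : (Pi.single (Fin.castSucc i) (1:ℂ) : Cn (n+1)) (Fin.castSucc k)
              = (Pi.single i (1:ℂ) : Cn n) k := by
            rcases eq_or_ne k i with rfl | hk
            · simp
            · rw [Pi.single_eq_of_ne hk, Pi.single_eq_of_ne (fun h => hk (Fin.castSucc_inj.1 h))]
          simp [Fin.snoc_castSucc, hw'def, hδidef, hsing]
      set g : ℂ → ℂ := fun l => F (w' + l • δi) with hgdef
      have hg0 : g 0 = 0 := by
        rw [hgdef]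
        simpa using hfw
      have hmemb : ∀ (l : ℂ), ‖l‖ < r/2 →
          (Fin.snoc (w' + l • δi) (w (Fin.last n)) : Cn (n+1)) ∈ ball w r := fun l hl =>
        hmem_ball _ _ (by rw [norm_smul, hδinorm, mul_one]; exact hl) (by simpa using half_pos hr)
      have hgdiff : DifferentiableOn ℂ g (ball (0:ℂ) (r/2)) := by
        intro l hl
        have hl' : ‖l‖ < r/2 := mem_ball_zero_iff.1 hl
        have hU'mem : w' + l • δi ∈ U' := by
          have h1 := hprojU (hVU (hV''V (hbr (hmemb l hl'))))
          rwa [init_snoc'] at h1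
        exact ((hF _ hU'mem).comp l
          ((differentiableAt_fun_id.smul_const δi).const_add w')).differentiableWithinAt
      by_cases hev : ∀ᶠ l in 𝓝 (0:ℂ), g l = 0
      · obtain ⟨ρ, hρ, hρz⟩ := Metric.eventually_nhds_iff.1 hev
        refine ⟨min ρ (r/2), lt_min hρ (half_pos hr), fun l hl => ?_⟩
        have h1 : ‖l‖ < ρ := lt_of_lt_of_le hl (min_le_left _ _)
        have h2 : ‖l‖ < r/2 := lt_of_lt_of_le hl (min_le_right _ _)
        have hFzero : F (w' + l • δi) = 0 := hρz (by simpa [dist_zero_right] using h1)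
        rw [hrep l]
        exact hGzero _ (hsnocS _ _ hFzero (hV''V (hbr (hmemb l h2)))) (hbr (hmemb l h2))
      · -- the essential-singularity case
        have key : ∀ τ : ℂ, τ ≠ 0 → ‖τ - w (Fin.last n)‖ < r/2 →
            ∀ l : ℂ, ‖l‖ < r/2 → G (Fin.snoc (w' + l • δi) τ) = 0 := by
          intro τ hτ hτr
          have hrep2 : ∀ l : ℂ, (Fin.snoc (w' + l • δi) τ : Cn (n+1))
              = (Fin.snoc w' τ : Cn (n+1)) + l • (Fin.snoc δi 0 : Cn (n+1)) := by
            intro l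
            funext i'
            refine Fin.lastCases ?_ (fun k => ?_) i' <;>
              simp [Fin.snoc_last, Fin.snoc_castSucc]
          have hmembτ : ∀ (l : ℂ), ‖l‖ < r/2 →
              (Fin.snoc (w' + l • δi) τ : Cn (n+1)) ∈ ball w r := fun l hl =>
            hmem_ball _ _ (by rw [norm_smul, hδinorm, mul_one]; exact hl) hτr
          have hdiff : DifferentiableOn ℂ (fun l : ℂ => G (Fin.snoc (w' + l • δi) τ))
              (ball (0:ℂ) (r/2)) := by
            intro l hl
            have hl' : ‖l‖ < r/2 := mem_ball_zero_iff.1 hl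
            have hGd : DifferentiableAt ℂ G (Fin.snoc (w' + l • δi) τ) :=
              hG _ (hbr (hmembτ l hl'))
            have heqf : (fun l' : ℂ => G (Fin.snoc (w' + l' • δi) τ))
                = fun l' : ℂ => G ((Fin.snoc w' τ : Cn (n+1)) + l' • (Fin.snoc δi 0 : Cn (n+1))) :=
              funext fun l' => by rw [hrep2 l']
            rw [heqf]
            apply DifferentiableAt.differentiableWithinAt
            apply DifferentiableAt.comp
            · rw [← hrep2 l]; exact hGd
            · exact (differentiableAt_fun_id.smul_const _).const_add _
          have hfreq : ∃ᶠ l in 𝓝[≠] (0:ℂ), G (Fin.snoc ((w' + l • δi)) τ) = 0 := by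
            rw [Filter.frequently_iff]
            intro s hs
            obtain ⟨ε₁, hε₁, hball₁⟩ := Metric.mem_nhdsWithin_iff.1 hs
            obtain ⟨l, hlnorm, hgl, hexp⟩ := reach_exp (half_pos hr) hgdiff hg0 hev τ hτ
              (lt_min hε₁ (half_pos hr))
            have hl2 : ‖l‖ < r/2 := lt_of_lt_of_le hlnorm (min_le_right _ _)
            have hl0 : l ≠ 0 := fun h0 => hgl (by rw [h0]; exact hg0)
            refine ⟨l, hball₁ ⟨mem_ball_zero_iff.2 (lt_of_lt_of_le hlnorm (min_le_left _ _)), hl0⟩, ?_⟩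
            have hballm := hmembτ l hl2
            have hW'mem : (Fin.snoc (w' + l • δi) τ : Cn (n+1)) ∈ W' := by
              rw [hW']
              refine ⟨hVU (hV''V (hbr hballm)), ?_, ?_⟩
              · rw [init_snoc']; exact hgl
              · rw [Fin.snoc_last, init_snoc']; exact hexp.symm
            exact hGzero _ (hWS ⟨hW'mem, hV''V (hbr hballm)⟩) (hbr hballm)
          have hzero := (hdiff.analyticOnNhd isOpen_ball).eqOn_zero_of_preconnected_of_frequently_eq_zero
            (convex_ball _ _).isPreconnected (mem_ball_self (half_pos hr)) hfreq
          intro l hl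
          exact hzero (mem_ball_zero_iff.2 hl)
        refine ⟨r/2, half_pos hr, fun l hl => ?_⟩
        rw [hrep l]
        by_cases hw0 : w (Fin.last n) = 0
        · -- limit τ → 0 along nonzero τ
          have hccont : Continuous (fun τ' : ℂ => (Fin.snoc (w' + l • δi) τ' : Cn (n+1))) := by
            apply continuous_pi
            intro i'
            refine Fin.lastCases ?_ (fun k => ?_) i'
            · simp only [Fin.snoc_last]; exact continuous_id
            · simp only [Fin.snoc_castSucc]; exact continuous_const
          have hc0mem : (Fin.snoc (w' + l • δi) (w (Fin.last n)) : Cn (n+1)) ∈ ball w r :=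
            hmemb l hl
          have hGc : ContinuousAt (fun τ' : ℂ => G (Fin.snoc (w' + l • δi) τ'))
              (w (Fin.last n)) :=
            ((hG _ (hbr hc0mem)).continuousAt).comp hccont.continuousAt
          have h1 : Tendsto (fun τ' : ℂ => G (Fin.snoc (w' + l • δi) τ')) (𝓝[≠] (0:ℂ))
              (𝓝 (G (Fin.snoc (w' + l • δi) (w (Fin.last n))))) := by
            rw [← hw0]
            exact hGc.tendsto.mono_left nhdsWithin_le_nhds
          have h2 : ∀ᶠ τ' in 𝓝[≠] (0:ℂ), G (Fin.snoc (w' + l • δi) τ') = 0 := by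
            have hball2 : ∀ᶠ τ' in 𝓝 (0:ℂ), ‖τ' - w (Fin.last n)‖ < r/2 := by
              rw [hw0]
              filter_upwards [ball_mem_nhds (0:ℂ) (half_pos hr)] with τ' hτ'
              simpa [sub_zero] using mem_ball_zero_iff.1 hτ'
            filter_upwards [hball2.filter_mono nhdsWithin_le_nhds, self_mem_nhdsWithin]
              with τ' hτ'r hτ'0
            exact key τ' hτ'0 hτ'r l hl
          have h3 : Tendsto (fun τ' : ℂ => G (Fin.snoc (w' + l • δi) τ')) (𝓝[≠] (0:ℂ))
              (𝓝 0) := Tendsto.congr' (by filter_upwards [h2] with τ' h using h.symm)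
              tendsto_const_nhds
          exact tendsto_nhds_unique h1 h3
        · exact key (w (Fin.last n)) hw0 (by simpa using half_pos hr) l hl
  -- (5) conclude fderiv ℂ G w = 0, contradiction
  have hdirs : ∀ j : Fin (n+1), fderiv ℂ G w (Pi.single j (1:ℂ) : Cn (n+1)) = 0 := by
    intro j
    obtain ⟨ρ, hρ, hz⟩ := hdir j
    have hevd : (fun l : ℂ => G (w + l • (Pi.single j (1:ℂ) : Cn (n+1)))) =ᶠ[𝓝 (0:ℂ)] (fun _ => 0) :=
      Metric.eventually_nhds_iff.2 ⟨ρ, hρ, fun l hl =>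
        hz l (by simpa [dist_zero_right] using hl)⟩
    have haff : HasFDerivAt (fun l : ℂ => w + l • (Pi.single j (1:ℂ) : Cn (n+1)))
        ((1 : ℂ →L[ℂ] ℂ).smulRight (Pi.single j (1:ℂ) : Cn (n+1))) 0 := by
      have h1 := ((1 : ℂ →L[ℂ] ℂ).smulRight (Pi.single j (1:ℂ) : Cn (n+1))).hasFDerivAt (x := (0:ℂ))
      have h2 := h1.const_add w
      simpa [ContinuousLinearMap.smulRight_apply] using h2
    have hGd : HasFDerivAt G (fderiv ℂ G w) ((fun l : ℂ => w + l • (Pi.single j (1:ℂ) : Cn (n+1))) 0) := by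
      simpa using (hG w hwV'').hasFDerivAt
    have hcomp := hGd.comp (0:ℂ) haff
    have hconst : HasFDerivAt (fun l : ℂ => G (w + l • (Pi.single j (1:ℂ) : Cn (n+1))))
        (0 : ℂ →L[ℂ] ℂ) 0 :=
      (hasFDerivAt_const (0:ℂ) (0:ℂ)).congr_of_eventuallyEq hevd
    have huniq : (fderiv ℂ G w).comp ((1 : ℂ →L[ℂ] ℂ).smulRight (Pi.single j (1:ℂ) : Cn (n+1)))
        = (0 : ℂ →L[ℂ] ℂ) := hcomp.unique hconst
    have happ := congrFun (congrArg DFunLike.coe huniq) (1:ℂ)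
    simpa [ContinuousLinearMap.smulRight_apply] using happ
  have hfder : fderiv ℂ G w = 0 := by
    ext v
    have h1 : ∀ j : Fin (n+1), (v j) • (Pi.single j (1:ℂ) : Cn (n+1)) = Pi.single j (v j) := by
      intro j
      rw [← Pi.single_smul, smul_eq_mul, mul_one]
    have hv : v = ∑ j, (v j) • (Pi.single j (1:ℂ) : Cn (n+1)) := by
      simp_rw [h1]
      exact (Finset.univ_sum_single v).symm
    rw [hv, map_sum]
    simp [hdirs]
  exact hG' w hwV'' hfder
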